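/- Let T be an N×N complex matrix with operator norm ‖T‖_{2,2} ≤ 1, and let c(T) = sup_{j,k} |T_{jk}|. Then for all t ∈ [0,1] and all ψ ∈ ℂ^N, ‖Tψ‖_{2/(1-t)} ≤ c(T)^t · ‖ψ‖_{2/(1+t)}, where ‖·‖_p denotes the ℓ^p norm (with 2/(1-t) interpreted as ∞ when t = 1). -/

import Mathlib

open scoped BigOperators

/-- The `ℓ^p` norm of a vector in `ℂ^N`, for a real exponent `p`. -/
noncomputable def lpNorm {N : ℕ} (p : ℝ) (ψ : Fin N → ℂ) : ℝ :=
  (∑ j, ‖ψ j‖ ^ p) ^ (1 / p)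

/-- The `ℓ^∞` norm of a vector in `ℂ^N`. -/
noncomputable def lInftyNorm {N : ℕ} (ψ : Fin N → ℂ) : ℝ :=
  ⨆ j, ‖ψ j‖

namespace RieszAux

lemma lpNorm_nonneg {N : ℕ} (p : ℝ) (ψ : Fin N → ℂ) : 0 ≤ lpNorm p ψ :=
  Real.rpow_nonneg (Finset.sum_nonneg fun j _ => Real.rpow_nonneg (norm_nonneg _) p) _

lemma sum_le_one_of_lpNorm_le_one {N : ℕ} {p : ℝ} (hp : 0 < p) {ψ : Fin N → ℂ}
    (h : lpNorm p ψ ≤ 1) : ∑ j, ‖ψ j‖ ^ p ≤ 1 := by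
  by_contra hS
  push_neg at hS
  have := Real.one_lt_rpow_iff_of_pos (lt_trans one_pos hS) (y := 1/p)
  rw [lpNorm] at h
  nlinarith [(this.mpr (Or.inl ⟨hS, by positivity⟩))]

lemma lpNorm_two_eq_sqrt {N : ℕ} (ψ : Fin N → ℂ) :
    lpNorm 2 ψ = Real.sqrt (∑ j, ‖ψ j‖ ^ (2:ℕ)) := by
  rw [lpNorm, Real.sqrt_eq_rpow]
  norm_num

lemma mulVec_l2_bound {N : ℕ} (T : Matrix (Fin N) (Fin N) ℂ) (ψ : Fin N → ℂ) :
    lpNorm 2 (T.mulVec ψ) ≤ ‖Matrix.toEuclideanCLM (𝕜 := ℂ) T‖ * lpNorm 2 ψ := by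
  have h1 : lpNorm 2 ψ = ‖(WithLp.equiv 2 (Fin N → ℂ)).symm ψ‖ := by
    rw [EuclideanSpace.norm_eq, lpNorm_two_eq_sqrt]; rfl
  have h2 : lpNorm 2 (T.mulVec ψ) =
      ‖Matrix.toEuclideanCLM (𝕜 := ℂ) T ((WithLp.equiv 2 (Fin N → ℂ)).symm ψ)‖ := by
    rw [WithLp.equiv_symm_apply, Matrix.toEuclideanCLM_toLp, EuclideanSpace.norm_eq, lpNorm_two_eq_sqrt]
  rw [h1, h2]
  exact (Matrix.toEuclideanCLM (𝕜 := ℂ) T).le_opNorm _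

end RieszAux

namespace RieszAux

lemma le_one_of_rpow_le_one {r p : ℝ} (hr : 0 ≤ r) (hp : 0 < p) (h : r ^ p ≤ 1) : r ≤ 1 := by
  by_contra hc
  push_neg at hc
  have := (Real.one_lt_rpow_iff_of_pos (lt_trans one_pos hc)).mpr (Or.inl ⟨hc, hp⟩)
  linarith

lemma bilinear_bound {N : ℕ} (T : Matrix (Fin N) (Fin N) ℂ)
    (hT : ‖Matrix.toEuclideanCLM (𝕜 := ℂ) T‖ ≤ 1)
    (c : ℝ) (hcpos : 0 < c) (hentry : ∀ j k, ‖T j k‖ ≤ c)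
    (t : ℝ) (ht0 : 0 < t) (ht1 : t < 1)
    (φ ψ : Fin N → ℂ) (hφ : lpNorm (2/(1+t)) φ ≤ 1) (hψ : lpNorm (2/(1+t)) ψ ≤ 1) :
    ‖∑ j, φ j * T.mulVec ψ j‖ ≤ c ^ t := by
  set p : ℝ := 2/(1+t) with hp_def
  have h1t : (0:ℝ) < 1 + t := by linarith
  have hp0 : 0 < p := by positivity
  have hpt : p/2 * (1+t) = 1 := by
    rw [hp_def]
    field_simp
  -- sums bounded by one
  have hφS : ∑ j, ‖φ j‖ ^ p ≤ 1 := sum_le_one_of_lpNorm_le_one hp0 hφ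
  have hψS : ∑ j, ‖ψ j‖ ^ p ≤ 1 := sum_le_one_of_lpNorm_le_one hp0 hψ
  have hcoord : ∀ (v : Fin N → ℂ), (∑ j, ‖v j‖ ^ p ≤ 1) → ∀ j, ‖v j‖ ≤ 1 := by
    intro v hv j
    refine le_one_of_rpow_le_one (norm_nonneg _) hp0 ?_
    calc ‖v j‖ ^ p ≤ ∑ i, ‖v i‖ ^ p :=
          Finset.single_le_sum (fun i _ => Real.rpow_nonneg (norm_nonneg _) p) (Finset.mem_univ j)
      _ ≤ 1 := hv
  -- the analytic family
  set G : (Fin N → ℂ) → Fin N → ℂ → ℂ := fun v j z =>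
    if v j = 0 then 0 else
      v j * Complex.exp ((((p/2 : ℝ) : ℂ) * (1 + z) - 1) * (Real.log ‖v j‖ : ℂ)) with hG_def
  have hGnorm : ∀ (v : Fin N → ℂ) (j : Fin N) (z : ℂ), 0 ≤ z.re →
      ‖G v j z‖ = ‖v j‖ ^ (p/2 * (1 + z.re)) := by
    intro v j z hz
    have hepos : 0 < p/2 * (1 + z.re) := by positivity
    by_cases h : v j = 0
    · simp [hG_def, h, Real.zero_rpow (ne_of_gt hepos)]
    · have hr : 0 < ‖v j‖ := norm_pos_iff.mpr h
      have hre : ((((p/2 : ℝ) : ℂ) * (1 + z) - 1) * (Real.log ‖v j‖ : ℂ)).re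
          = (p/2 * (1 + z.re) - 1) * Real.log ‖v j‖ := by
        simp [Complex.mul_re, Complex.add_re, Complex.add_im, Complex.ofReal_re,
          Complex.ofReal_im]
      rw [hG_def]
      simp only [if_neg h]
      rw [norm_mul, Complex.norm_exp, hre]
      rw [mul_comm (p/2 * (1 + z.re) - 1) (Real.log ‖v j‖), ← Real.rpow_def_of_pos hr]
      calc ‖v j‖ * ‖v j‖ ^ (p/2 * (1 + z.re) - 1)
          = ‖v j‖ ^ (1:ℝ) * ‖v j‖ ^ (p/2 * (1 + z.re) - 1) := by rw [Real.rpow_one]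
        _ = ‖v j‖ ^ (p/2 * (1 + z.re)) := by rw [← Real.rpow_add hr]; ring_nf
  have hGdiff : ∀ (v : Fin N → ℂ) (j : Fin N), Differentiable ℂ (G v j) := by
    intro v j
    by_cases h : v j = 0
    · simp only [hG_def, h, if_true]
      exact differentiable_const 0
    · simp only [hG_def, if_neg h]
      apply Differentiable.const_mul
      apply Complex.differentiable_exp.comp
      fun_prop
  have hGt : ∀ (v : Fin N → ℂ) (j : Fin N), G v j (t : ℂ) = v j := by
    intro v j
    have hcast : ((p/2*(1+t) - 1 : ℝ) : ℂ) = ((p/2:ℝ):ℂ) * (1 + (t:ℂ)) - 1 := by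
      push_cast; ring
    have hz0 : ((p/2:ℝ):ℂ) * (1 + (t:ℂ)) - 1 = 0 := by rw [← hcast, hpt]; simp
    by_cases h : v j = 0
    · simp [hG_def, h]
    · simp only [hG_def, if_neg h, hz0, zero_mul, Complex.exp_zero, mul_one]
  set F : ℂ → ℂ := fun z => ∑ j, ∑ k, G φ j z * T j k * G ψ k z with hF_def
  have hFdiff : Differentiable ℂ F := by
    apply Differentiable.fun_sum; intro j _
    apply Differentiable.fun_sum; intro k _
    exact ((hGdiff φ j).mul (differentiable_const _)).mul (hGdiff ψ k)
  -- pointwise bound on the closed strip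
  have hGle1 : ∀ (v : Fin N → ℂ), (∑ j, ‖v j‖ ^ p ≤ 1) → ∀ (j : Fin N) (z : ℂ),
      z.re ∈ Set.Icc (0:ℝ) 1 → ‖G v j z‖ ≤ 1 := by
    intro v hv j z hz
    rw [hGnorm v j z hz.1]
    exact Real.rpow_le_one (norm_nonneg _) (hcoord v hv j) (by nlinarith [hz.1])
  set B : ℝ := ∑ j, ∑ k, ‖T j k‖ with hB_def
  have hFbdd : ∀ z ∈ Complex.HadamardThreeLines.verticalClosedStrip 0 1, ‖F z‖ ≤ B := by
    intro z hz
    have hz' : z.re ∈ Set.Icc (0:ℝ) 1 := hz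
    calc ‖F z‖ ≤ ∑ j, ‖∑ k, G φ j z * T j k * G ψ k z‖ := norm_sum_le _ _
      _ ≤ ∑ j, ∑ k, ‖G φ j z * T j k * G ψ k z‖ :=
          Finset.sum_le_sum fun j _ => norm_sum_le _ _
      _ ≤ B := by
          rw [hB_def]
          refine Finset.sum_le_sum fun j _ => Finset.sum_le_sum fun k _ => ?_
          rw [norm_mul, norm_mul]
          have h1 := hGle1 φ hφS j z hz'
          have h2 := hGle1 ψ hψS k z hz'
          have := mul_le_mul (mul_le_mul h1 le_rfl (norm_nonneg (T j k)) zero_le_one) h2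
            (norm_nonneg (G ψ k z)) (by positivity)
          simpa using this
  have hBdd : BddAbove ((norm ∘ F) '' Complex.HadamardThreeLines.verticalClosedStrip 0 1) := by
    refine ⟨B, ?_⟩
    rintro x ⟨z, hz, rfl⟩
    exact hFbdd z hz
  -- rearrangement
  have hFre : ∀ z, F z = ∑ j, G φ j z * T.mulVec (fun k => G ψ k z) j := by
    intro z
    refine Finset.sum_congr rfl fun j _ => ?_
    simp [Matrix.mulVec, dotProduct, Finset.mul_sum, mul_assoc]
  -- edge 0
  have hl2 : ∀ (v : Fin N → ℂ), (∑ j, ‖v j‖ ^ p ≤ 1) → ∀ z : ℂ, z.re = 0 →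
      lpNorm 2 (fun j => G v j z) ≤ 1 := by
    intro v hv z hz
    have hsum : ∑ j, ‖G v j z‖ ^ (2:ℝ) ≤ 1 := by
      calc ∑ j, ‖G v j z‖ ^ (2:ℝ) = ∑ j, ‖v j‖ ^ p := by
            refine Finset.sum_congr rfl fun j _ => ?_
            rw [hGnorm v j z (le_of_eq hz.symm), ← Real.rpow_mul (norm_nonneg _)]
            congr 1
            rw [hz]; ring
        _ ≤ 1 := hv
    rw [lpNorm]
    exact Real.rpow_le_one
      (Finset.sum_nonneg fun j _ => Real.rpow_nonneg (norm_nonneg _) _) hsum (by norm_num)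
  have hedge0 : ∀ z : ℂ, z.re = 0 → ‖F z‖ ≤ 1 := by
    intro z hz
    rw [hFre z]
    set x : Fin N → ℂ := fun j => G φ j z with hx_def
    set y : Fin N → ℂ := T.mulVec (fun k => G ψ k z) with hy_def
    have hstep : ‖∑ j, x j * y j‖ ≤ lpNorm 2 x * lpNorm 2 y := by
      calc ‖∑ j, x j * y j‖ ≤ ∑ j, ‖x j * y j‖ := norm_sum_le _ _
        _ = ∑ j, ‖x j‖ * ‖y j‖ := by simp [norm_mul]
        _ ≤ Real.sqrt (∑ j, ‖x j‖^2) * Real.sqrt (∑ j, ‖y j‖^2) :=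
            Real.sum_mul_le_sqrt_mul_sqrt _ _ _
        _ = lpNorm 2 x * lpNorm 2 y := by rw [lpNorm_two_eq_sqrt, lpNorm_two_eq_sqrt]
    have hx1 : lpNorm 2 x ≤ 1 := hl2 φ hφS z hz
    have hy1 : lpNorm 2 y ≤ 1 := by
      calc lpNorm 2 y ≤ ‖Matrix.toEuclideanCLM (𝕜 := ℂ) T‖ * lpNorm 2 (fun k => G ψ k z) :=
            mulVec_l2_bound T _
        _ ≤ 1 * 1 := by
            have := hl2 ψ hψS z hz
            have h0 := lpNorm_nonneg 2 (fun k => G ψ k z)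
            nlinarith [norm_nonneg (Matrix.toEuclideanCLM (𝕜 := ℂ) T)]
        _ = 1 := by norm_num
    calc ‖∑ j, x j * y j‖ ≤ lpNorm 2 x * lpNorm 2 y := hstep
      _ ≤ 1 := by nlinarith [lpNorm_nonneg 2 x, lpNorm_nonneg 2 y]
  -- edge 1
  have hedge1 : ∀ z : ℂ, z.re = 1 → ‖F z‖ ≤ c := by
    intro z hz
    have hz0 : (0:ℝ) ≤ z.re := by rw [hz]; norm_num
    have hGp : ∀ (v : Fin N → ℂ) (j : Fin N), ‖G v j z‖ = ‖v j‖ ^ p := by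
      intro v j
      rw [hGnorm v j z hz0, hz]
      congr 1
      ring
    calc ‖F z‖ ≤ ∑ j, ‖∑ k, G φ j z * T j k * G ψ k z‖ := norm_sum_le _ _
      _ ≤ ∑ j, ∑ k, ‖G φ j z * T j k * G ψ k z‖ :=
          Finset.sum_le_sum fun j _ => norm_sum_le _ _
      _ ≤ ∑ j, ∑ k, ‖φ j‖ ^ p * c * ‖ψ k‖ ^ p := by
          refine Finset.sum_le_sum fun j _ => Finset.sum_le_sum fun k _ => ?_
          rw [norm_mul, norm_mul, hGp φ j, hGp ψ k]
          have h1 : (0:ℝ) ≤ ‖φ j‖ ^ p := Real.rpow_nonneg (norm_nonneg _) _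
          have h2 : (0:ℝ) ≤ ‖ψ k‖ ^ p := Real.rpow_nonneg (norm_nonneg _) _
          exact mul_le_mul_of_nonneg_right (mul_le_mul_of_nonneg_left (hentry j k) h1) h2
      _ = (∑ j, ‖φ j‖ ^ p) * c * (∑ k, ‖ψ k‖ ^ p) := by
          rw [Finset.sum_mul, Finset.sum_mul]
          refine Finset.sum_congr rfl fun j _ => ?_
          rw [Finset.mul_sum]
      _ ≤ c := by
          have h1 : (0:ℝ) ≤ ∑ j, ‖φ j‖ ^ p :=
            Finset.sum_nonneg fun j _ => Real.rpow_nonneg (norm_nonneg _) _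
          have h2 : (0:ℝ) ≤ ∑ k, ‖ψ k‖ ^ p :=
            Finset.sum_nonneg fun k _ => Real.rpow_nonneg (norm_nonneg _) _
          calc (∑ j, ‖φ j‖ ^ p) * c * (∑ k, ‖ψ k‖ ^ p) ≤ 1 * c * 1 :=
                mul_le_mul (mul_le_mul hφS le_rfl (le_of_lt hcpos) zero_le_one) hψS h2
                  (by positivity)
            _ = c := by ring
  -- Hadamard three lines
  have htz : (t:ℂ) ∈ Complex.HadamardThreeLines.verticalClosedStrip 0 1 := by
    simp only [Complex.HadamardThreeLines.verticalClosedStrip, Set.mem_preimage,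
      Complex.ofReal_re, Set.mem_Icc]
    exact ⟨le_of_lt ht0, le_of_lt ht1⟩
  have hkey := Complex.HadamardThreeLines.norm_le_interp_of_mem_verticalClosedStrip' (f := F) zero_lt_one htz
    hFdiff.diffContOnCl hBdd
    (fun z hz => hedge0 z (by simpa using hz)) (fun z hz => hedge1 z (by simpa using hz))
  rw [Complex.ofReal_re, Real.one_rpow, one_mul] at hkey
  simp only [sub_zero, div_one] at hkey
  -- identify F t
  have hψt : (fun k => G ψ k (t:ℂ)) = ψ := funext (hGt ψ)
  have hFt : F (t:ℂ) = ∑ j, φ j * T.mulVec ψ j := by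
    rw [hFre, hψt]
    refine Finset.sum_congr rfl fun j _ => ?_
    rw [hGt φ j]
  rw [← hFt]
  exact hkey

end RieszAux

namespace RieszAux

lemma lpNorm_const_mul {N : ℕ} {p : ℝ} (hp : 0 < p) (a : ℝ) (ha : 0 ≤ a) (ψ : Fin N → ℂ) :
    lpNorm p (fun j => ((a:ℝ):ℂ) * ψ j) = a * lpNorm p ψ := by
  have h1 : ∀ j, ‖((a:ℝ):ℂ) * ψ j‖ ^ p = a ^ p * ‖ψ j‖ ^ p := by
    intro j
    rw [norm_mul, Complex.norm_real, Real.norm_of_nonneg ha, Real.mul_rpow ha (norm_nonneg _)]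
  rw [lpNorm, lpNorm]
  simp_rw [h1]
  rw [← Finset.mul_sum, Real.mul_rpow (Real.rpow_nonneg ha _)
    (Finset.sum_nonneg fun j _ => Real.rpow_nonneg (norm_nonneg _) _),
    ← Real.rpow_mul ha]
  congr 2
  field_simp
  simp

lemma lpNorm_pos {N : ℕ} {p : ℝ} (hp : 0 < p) {ψ : Fin N → ℂ} (hψ : ψ ≠ 0) :
    0 < lpNorm p ψ := by
  obtain ⟨j, hj⟩ := Function.ne_iff.mp hψ
  have hj' : (0:ℝ) < ‖ψ j‖ := norm_pos_iff.mpr hj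
  have hS : 0 < ∑ i, ‖ψ i‖ ^ p := by
    refine Finset.sum_pos' (fun i _ => Real.rpow_nonneg (norm_nonneg _) _) ?_
    exact ⟨j, Finset.mem_univ j, Real.rpow_pos_of_pos hj' p⟩
  exact Real.rpow_pos_of_pos hS _

lemma lpNorm_zero {N : ℕ} {p : ℝ} (hp : 0 < p) : lpNorm p (0 : Fin N → ℂ) = 0 := by
  rw [lpNorm]
  have h0 : ∀ j : Fin N, ‖(0 : Fin N → ℂ) j‖ ^ p = 0 := fun j => by
    simp [Real.zero_rpow (ne_of_gt hp)]
  rw [Finset.sum_congr rfl fun j _ => h0 j]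
  simp only [Finset.sum_const, smul_zero]
  exact Real.zero_rpow (by positivity)

lemma core_bound {N : ℕ} (T : Matrix (Fin N) (Fin N) ℂ)
    (hT : ‖Matrix.toEuclideanCLM (𝕜 := ℂ) T‖ ≤ 1)
    (c : ℝ) (hcpos : 0 < c) (hentry : ∀ j k, ‖T j k‖ ≤ c)
    (t : ℝ) (ht0 : 0 < t) (ht1 : t < 1)
    (ψ : Fin N → ℂ) (hψ : lpNorm (2/(1+t)) ψ ≤ 1) :
    lpNorm (2/(1-t)) (T.mulVec ψ) ≤ c ^ t := by
  set q : ℝ := 2/(1-t) with hq_def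
  have h1t : (0:ℝ) < 1 - t := by linarith
  have h1t' : (0:ℝ) < 1 + t := by linarith
  have hq2 : 2 < q := by
    rw [hq_def, lt_div_iff₀ h1t]; nlinarith
  have hq0 : 0 < q := by linarith
  set x : Fin N → ℂ := T.mulVec ψ with hx_def
  by_cases hx0 : x = 0
  · rw [hx0, lpNorm_zero hq0]
    positivity
  · set b : ℝ := lpNorm q x with hb_def
    have hb : 0 < b := lpNorm_pos hq0 hx0
    have hbq : b ^ q = ∑ j, ‖x j‖ ^ q := by
      rw [hb_def, lpNorm, ← Real.rpow_mul
        (Finset.sum_nonneg fun j _ => Real.rpow_nonneg (norm_nonneg _) _)]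
      rw [one_div_mul_cancel (ne_of_gt hq0), Real.rpow_one]
    -- the dual vector
    set φ : Fin N → ℂ := fun j =>
      (starRingEnd ℂ) (x j) * (((‖x j‖ ^ (q - 2) / b ^ (q-1)) : ℝ) : ℂ) with hφ_def
    have hxq : ∀ j, ‖x j‖ * ‖x j‖ ^ (q - 2) = ‖x j‖ ^ (q - 1) := by
      intro j
      by_cases h : x j = 0
      · simp [h, Real.zero_rpow (by linarith : q - 2 ≠ 0),
          Real.zero_rpow (by linarith : q - 1 ≠ 0)]
      · have hr : 0 < ‖x j‖ := norm_pos_iff.mpr h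
        calc ‖x j‖ * ‖x j‖ ^ (q - 2) = ‖x j‖ ^ (1:ℝ) * ‖x j‖ ^ (q - 2) := by
              rw [Real.rpow_one]
          _ = ‖x j‖ ^ (q - 1) := by rw [← Real.rpow_add hr]; ring_nf
    have hφnorm : ∀ j, ‖φ j‖ = ‖x j‖ ^ (q-1) / b ^ (q-1) := by
      intro j
      rw [hφ_def]
      simp only [norm_mul, Complex.norm_conj, Complex.norm_real]
      rw [Real.norm_of_nonneg (by positivity), ← mul_div_assoc, hxq j]
    have hφ1 : lpNorm (2/(1+t)) φ ≤ 1 := by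
      have hqp : (q - 1) * (2/(1+t)) = q := by
        rw [hq_def]; field_simp; ring
      have : ∑ j, ‖φ j‖ ^ (2/(1+t)) = 1 := by
        have : ∀ j, ‖φ j‖ ^ (2/(1+t)) = ‖x j‖ ^ q / b ^ q := by
          intro j
          rw [hφnorm j, Real.div_rpow (Real.rpow_nonneg (norm_nonneg _) _)
            (Real.rpow_nonneg (le_of_lt hb) _)]
          rw [← Real.rpow_mul (norm_nonneg _), ← Real.rpow_mul (le_of_lt hb), hqp]
        rw [Finset.sum_congr rfl fun j _ => this j, ← Finset.sum_div, ← hbq,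
          div_self (by positivity)]
      rw [lpNorm, this, Real.one_rpow]
    have hsum : ∑ j, φ j * x j = ((b : ℝ) : ℂ) := by
      have hterm : ∀ j, φ j * x j = ((‖x j‖ ^ q / b ^ (q-1) : ℝ) : ℂ) := by
        intro j
        rw [hφ_def]
        have : (starRingEnd ℂ) (x j) * (((‖x j‖ ^ (q - 2) / b ^ (q-1)) : ℝ) : ℂ) * x j
            = ((starRingEnd ℂ) (x j) * x j) * (((‖x j‖ ^ (q - 2) / b ^ (q-1)) : ℝ) : ℂ) := by
          ring
        rw [this, Complex.conj_mul']
        rw [← Complex.ofReal_pow, ← Complex.ofReal_mul]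
        congr 1
        rw [← mul_div_assoc]
        congr 1
        by_cases h : x j = 0
        · simp [h, Real.zero_rpow (by linarith : q - 2 ≠ 0),
            Real.zero_rpow (ne_of_gt hq0)]
        · have hr : 0 < ‖x j‖ := norm_pos_iff.mpr h
          rw [← Real.rpow_natCast ‖x j‖ 2, ← Real.rpow_add hr]
          norm_num
      rw [Finset.sum_congr rfl fun j _ => hterm j, ← Complex.ofReal_sum]
      congr 1
      rw [← Finset.sum_div, ← hbq]
      rw [div_eq_iff (by positivity)]
      have hb1 : b * b ^ (q-1) = b ^ q := by
        calc b * b ^ (q-1) = b ^ (1:ℝ) * b ^ (q-1) := by rw [Real.rpow_one]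
          _ = b ^ q := by rw [← Real.rpow_add hb]; ring_nf
      exact hb1.symm
    have hkey := bilinear_bound T hT c hcpos hentry t ht0 ht1 φ ψ hφ1 hψ
    rw [← hx_def] at hkey
    rw [hsum] at hkey
    rw [Complex.norm_real, Real.norm_of_nonneg (le_of_lt hb)] at hkey
    exact hkey

end RieszAux

/-- Riesz-interpolation estimate underlying the Entropic Uncertainty Principle:
if `‖T‖_{2,2} ≤ 1` and `c(T) = sup_{j,k} |T_{jk}|`, then for all `t ∈ [0,1]` and all `ψ`,
`‖Tψ‖_{2/(1-t)} ≤ c(T)^t ‖ψ‖_{2/(1+t)}`, where for `t = 1` the exponent `2/(1-t)` is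
interpreted as `∞`. -/
theorem riesz_interpolation_estimate {N : ℕ} (T : Matrix (Fin N) (Fin N) ℂ)
    (hT : ‖Matrix.toEuclideanCLM (𝕜 := ℂ) T‖ ≤ 1)
    (c : ℝ) (hc : IsGreatest {x : ℝ | ∃ j k, x = ‖T j k‖} c)
    (t : ℝ) (ht : t ∈ Set.Icc (0 : ℝ) 1) (ψ : Fin N → ℂ) :
    (t < 1 → lpNorm (2 / (1 - t)) (T.mulVec ψ) ≤ c ^ t * lpNorm (2 / (1 + t)) ψ) ∧
      (t = 1 → lInftyNorm (T.mulVec ψ) ≤ c ^ t * lpNorm (2 / (1 + t)) ψ) := by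
  obtain ⟨ht0, ht1⟩ := ht
  have hentry : ∀ j k, ‖T j k‖ ≤ c := fun j k => hc.2 ⟨j, k, rfl⟩
  obtain ⟨j0, k0, hj0⟩ := hc.1
  have hc0 : 0 ≤ c := hj0 ▸ norm_nonneg _
  constructor
  · -- case t < 1
    intro htlt
    by_cases ht0' : t = 0
    · subst ht0'
      have e1 : (2:ℝ) / (1 - 0) = 2 := by norm_num
      have e2 : (2:ℝ) / (1 + 0) = 2 := by norm_num
      rw [e1, e2, Real.rpow_zero, one_mul]
      calc lpNorm 2 (T.mulVec ψ) ≤ ‖Matrix.toEuclideanCLM (𝕜 := ℂ) T‖ * lpNorm 2 ψ :=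
            RieszAux.mulVec_l2_bound T ψ
        _ ≤ 1 * lpNorm 2 ψ :=
            mul_le_mul_of_nonneg_right hT (RieszAux.lpNorm_nonneg 2 ψ)
        _ = lpNorm 2 ψ := one_mul _
    · have htpos : 0 < t := lt_of_le_of_ne ht0 (Ne.symm ht0')
      by_cases hcpos : 0 < c
      · -- main case
        by_cases hψ0 : ψ = 0
        · subst hψ0
          rw [Matrix.mulVec_zero, RieszAux.lpNorm_zero (div_pos two_pos (by linarith : (0:ℝ) < 1 - t))]
          exact mul_nonneg (Real.rpow_nonneg hc0 t) (RieszAux.lpNorm_nonneg _ _)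
        · set p : ℝ := 2/(1+t) with hp_def
          have hp0 : (0:ℝ) < p := by positivity
          have hq0 : (0:ℝ) < 2/(1-t) := by
            have : (0:ℝ) < 1 - t := by linarith
            positivity
          set a : ℝ := lpNorm p ψ with ha_def
          have ha : 0 < a := RieszAux.lpNorm_pos hp0 hψ0
          set ψ' : Fin N → ℂ := fun j => ((a⁻¹ : ℝ):ℂ) * ψ j with hψ'_def
          have hψ'1 : lpNorm p ψ' ≤ 1 := by
            rw [hψ'_def, RieszAux.lpNorm_const_mul hp0 a⁻¹ (by positivity) ψ, ← ha_def,
              inv_mul_cancel₀ (ne_of_gt ha)]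
          have hmul : T.mulVec ψ' = fun j => ((a⁻¹ : ℝ):ℂ) * T.mulVec ψ j := by
            funext j
            rw [hψ'_def]
            simp only [Matrix.mulVec, dotProduct, Finset.mul_sum]
            exact Finset.sum_congr rfl fun k _ => by ring
          have hkey := RieszAux.core_bound T hT c hcpos hentry t htpos htlt ψ' hψ'1
          rw [hmul, RieszAux.lpNorm_const_mul hq0 a⁻¹ (by positivity) (T.mulVec ψ)] at hkey
          calc lpNorm (2/(1-t)) (T.mulVec ψ)
              = a * (a⁻¹ * lpNorm (2/(1-t)) (T.mulVec ψ)) := by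
                field_simp
            _ ≤ a * c ^ t := mul_le_mul_of_nonneg_left hkey (le_of_lt ha)
            _ = c ^ t * lpNorm p ψ := by rw [mul_comm, ha_def]
      · -- c = 0
        have hc00 : c = 0 := le_antisymm (not_lt.mp hcpos) hc0
        have hTz : ∀ j k, T j k = 0 := by
          intro j k
          have := hentry j k
          rw [hc00] at this
          exact norm_le_zero_iff.mp this
        have hmv : T.mulVec ψ = 0 := by
          funext j
          simp only [Matrix.mulVec, dotProduct]
          rw [Finset.sum_congr rfl fun k _ => by rw [hTz j k, zero_mul]]
          simp
        rw [hmv, RieszAux.lpNorm_zero (div_pos two_pos (by linarith : (0:ℝ) < 1 - t)),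
          hc00, Real.zero_rpow (ne_of_gt htpos), zero_mul]
  · -- case t = 1
    intro ht1'
    subst ht1'
    have e2 : (2:ℝ) / (1 + 1) = 1 := by norm_num
    rw [e2, Real.rpow_one]
    have hsum : ∀ j : Fin N, ‖T.mulVec ψ j‖ ≤ c * ∑ k, ‖ψ k‖ := by
      intro j
      calc ‖T.mulVec ψ j‖ = ‖∑ k, T j k * ψ k‖ := rfl
        _ ≤ ∑ k, ‖T j k * ψ k‖ := norm_sum_le _ _
        _ ≤ ∑ k, c * ‖ψ k‖ := by
            refine Finset.sum_le_sum fun k _ => ?_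
            rw [norm_mul]
            exact mul_le_mul_of_nonneg_right (hentry j k) (norm_nonneg _)
        _ = c * ∑ k, ‖ψ k‖ := by rw [Finset.mul_sum]
    have hN : Nonempty (Fin N) := ⟨j0⟩
    have hlp1 : lpNorm 1 ψ = ∑ k, ‖ψ k‖ := by
      rw [lpNorm]
      simp [Real.rpow_one]
    rw [lInftyNorm, hlp1]
    exact ciSup_le hsum
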